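/- Let b > 0 and f > 0 satisfy φ←(b) + κb > (φ→(f) - κ)/f. Then there exists a unique B > 0 such that φ←(B) + bf·φ←(B/(bf)) + φ→(f) - f·φ←(b) = 0. (This is the vacuum-free solvability of the interaction Riemann problem for a head-on interaction in the isentropic p-system, where b and f are the ξ-ratios of the incoming backward and forward waves and B is the ξ-ratio of the outgoing backward wave.) -/

import Mathlib

open Real Set Filter Topology

/-- κ = √γ / α with α = (γ-1)/2. -/
noncomputable def kappa (γ : ℝ) : ℝ := Real.sqrt γ / ((γ - 1) / 2)

/-- The shock branch x ↦ √((1 - x^{-1/α})(x^{γ/α} - 1)), α = (γ-1)/2. -/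
noncomputable def shockPart (γ : ℝ) (x : ℝ) : ℝ :=
  Real.sqrt ((1 - x ^ (-(1 : ℝ) / ((γ - 1) / 2))) * (x ^ (γ / ((γ - 1) / 2)) - 1))

/-- Backward auxiliary function φ← : rarefaction branch κ(x-1) for x ≤ 1,
    shock branch for x ≥ 1 (they agree, with value 0, at x = 1). -/
noncomputable def phiB (γ : ℝ) (x : ℝ) : ℝ :=
  if x ≤ 1 then kappa γ * (x - 1) else shockPart γ x

/-- Forward auxiliary function φ→ : shock branch -√(...) for x ≤ 1,
    rarefaction branch κ(x-1) for x ≥ 1 (they agree, with value 0, at x = 1). -/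
noncomputable def phiF (γ : ℝ) (x : ℝ) : ℝ :=
  if x < 1 then -shockPart γ x else kappa γ * (x - 1)

lemma kappa_pos {γ : ℝ} (hγ : 1 < γ) : 0 < kappa γ :=
  div_pos (Real.sqrt_pos.2 (by linarith)) (by linarith)

lemma shockPart_one (γ : ℝ) : shockPart γ 1 = 0 := by
  simp [shockPart]

lemma shockPart_nonneg (γ : ℝ) (x : ℝ) : 0 ≤ shockPart γ x := Real.sqrt_nonneg _

lemma alpha_pos {γ : ℝ} (hγ : 1 < γ) : 0 < (γ - 1) / 2 := by linarith

lemma shockPart_pos {γ : ℝ} (hγ : 1 < γ) {x : ℝ} (hx : 1 < x) : 0 < shockPart γ x := by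
  have hα := alpha_pos hγ
  apply Real.sqrt_pos.2
  apply mul_pos
  · have : x ^ (-(1 : ℝ) / ((γ - 1) / 2)) < 1 :=
      Real.rpow_lt_one_of_one_lt_of_neg hx (div_neg_of_neg_of_pos (by norm_num) hα)
    linarith
  · have : (1:ℝ) < x ^ (γ / ((γ - 1) / 2)) :=
      (Real.one_lt_rpow_iff_of_pos (by linarith)).2 (Or.inl ⟨hx, div_pos (by linarith) hα⟩)
    linarith

lemma shockPart_strictMono {γ : ℝ} (hγ : 1 < γ) {x y : ℝ} (hx : 1 ≤ x) (hxy : x < y) :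
    shockPart γ x < shockPart γ y := by
  have hα := alpha_pos hγ
  have hx0 : (0:ℝ) < x := by linarith
  have hy1 : 1 < y := lt_of_le_of_lt hx hxy
  have hy0 : (0:ℝ) < y := by linarith
  have hq : 0 < γ / ((γ - 1) / 2) := div_pos (by linarith) hα
  have ha1 : y ^ (-(1 : ℝ) / ((γ - 1) / 2)) ≤ x ^ (-(1 : ℝ) / ((γ - 1) / 2)) := by
    rw [neg_div, Real.rpow_neg hx0.le, Real.rpow_neg hy0.le]
    exact inv_anti₀ (Real.rpow_pos_of_pos hx0 _)
      (Real.rpow_le_rpow hx0.le hxy.le (div_nonneg zero_le_one hα.le))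
  have ha2 : y ^ (-(1 : ℝ) / ((γ - 1) / 2)) < 1 :=
    Real.rpow_lt_one_of_one_lt_of_neg hy1 (div_neg_of_neg_of_pos (by norm_num) hα)
  have hc1 : (1:ℝ) ≤ x ^ (γ / ((γ - 1) / 2)) := Real.one_le_rpow hx hq.le
  have hc2 : x ^ (γ / ((γ - 1) / 2)) < y ^ (γ / ((γ - 1) / 2)) :=
    Real.rpow_lt_rpow hx0.le hxy hq
  apply Real.sqrt_lt_sqrt
  · apply mul_nonneg
    · have : x ^ (-(1 : ℝ) / ((γ - 1) / 2)) ≤ 1 := by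
        calc x ^ (-(1:ℝ) / ((γ - 1) / 2)) ≤ 1 ^ (-(1:ℝ) / ((γ - 1) / 2)) := by
              rw [neg_div, Real.rpow_neg hx0.le, Real.rpow_neg (by norm_num : (0:ℝ) ≤ 1)]
              exact inv_anti₀ (Real.rpow_pos_of_pos one_pos _)
                (Real.rpow_le_rpow (by norm_num) hx (div_nonneg zero_le_one hα.le))
          _ = 1 := Real.one_rpow _
      linarith
    · linarith
  · exact mul_lt_mul' (by linarith) (by linarith) (by linarith) (by linarith)

lemma phiB_one (γ : ℝ) : phiB γ 1 = 0 := by simp [phiB]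

lemma phiB_strictMonoOn {γ : ℝ} (hγ : 1 < γ) {x y : ℝ} (hx : 0 < x) (hxy : x < y) :
    phiB γ x < phiB γ y := by
  have hκ := kappa_pos hγ
  unfold phiB
  rcases le_or_gt y 1 with hy | hy
  · rw [if_pos (hxy.le.trans hy), if_pos hy]
    have := mul_lt_mul_of_pos_left (show x - 1 < y - 1 by linarith) hκ
    linarith
  · rw [if_neg (not_le.2 hy)]
    rcases le_or_gt x 1 with hx1 | hx1
    · rw [if_pos hx1]
      have h1 : kappa γ * (x - 1) ≤ 0 := mul_nonpos_of_nonneg_of_nonpos hκ.le (by linarith)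
      exact lt_of_le_of_lt h1 (shockPart_pos hγ hy)
    · rw [if_neg (not_le.2 hx1)]
      exact shockPart_strictMono hγ hx1.le hxy

lemma phiB_gt_neg_kappa {γ : ℝ} (hγ : 1 < γ) {x : ℝ} (hx : 0 < x) :
    -kappa γ < phiB γ x := by
  have hκ := kappa_pos hγ
  unfold phiB
  rcases le_or_gt x 1 with h | h
  · rw [if_pos h]; nlinarith
  · rw [if_neg (not_le.2 h)]
    have := shockPart_nonneg γ x
    linarith

lemma shockPart_continuousAt {γ : ℝ} {x : ℝ} (hx : 0 < x) :
    ContinuousAt (shockPart γ) x := by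
  apply Real.continuous_sqrt.continuousAt.comp
  apply ContinuousAt.mul
  · exact continuousAt_const.sub (Real.continuousAt_rpow_const x _ (Or.inl hx.ne'))
  · exact (Real.continuousAt_rpow_const x _ (Or.inl hx.ne')).sub continuousAt_const

lemma phiB_continuousAt {γ : ℝ} {x : ℝ} (hx : 0 < x) :
    ContinuousAt (phiB γ) x := by
  rcases lt_trichotomy x 1 with h | h | h
  · have hev : (fun y => kappa γ * (y - 1)) =ᶠ[𝓝 x] phiB γ := by
      filter_upwards [isOpen_Iio.eventually_mem (show x ∈ Iio 1 from h)] with y hy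
      simp [phiB, le_of_lt (show y < 1 from hy)]
    exact ContinuousAt.congr (by fun_prop) hev
  · subst h
    rw [ContinuousAt, phiB_one, ← nhdsLE_sup_nhdsGT (1:ℝ), tendsto_sup]
    constructor
    · have : Tendsto (fun y : ℝ => kappa γ * (y - 1)) (𝓝[≤] 1) (𝓝 0) := by
        have : Tendsto (fun y : ℝ => kappa γ * (y - 1)) (𝓝 1) (𝓝 (kappa γ * (1 - 1))) :=
          (continuous_const.mul (continuous_id.sub continuous_const)).tendsto 1
        simpa using this.mono_left nhdsWithin_le_nhds
      apply this.congr'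
      filter_upwards [self_mem_nhdsWithin] with y (hy : y ≤ 1)
      simp [phiB, hy]
    · have : Tendsto (shockPart γ) (𝓝[>] 1) (𝓝 0) := by
        have := (shockPart_continuousAt (γ := γ) one_pos).tendsto
        rw [shockPart_one] at this
        exact this.mono_left nhdsWithin_le_nhds
      apply this.congr'
      filter_upwards [self_mem_nhdsWithin] with y (hy : 1 < y)
      simp [phiB, not_le.2 hy]
  · have hev : shockPart γ =ᶠ[𝓝 x] phiB γ := by
      filter_upwards [isOpen_Ioi.eventually_mem (show x ∈ Ioi 1 from h)] with y hy
      simp [phiB, not_le.2 (show (1:ℝ) < y from hy)]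
    exact ContinuousAt.congr (shockPart_continuousAt (by linarith)) hev

/-- vacuum-free solvability of the head-on interaction Riemann problem. -/
theorem headon_interaction_solvable (γ : ℝ) (hγ : 1 < γ)
    (b f : ℝ) (hb : 0 < b) (hf : 0 < f)
    (hnovac : (phiF γ f - kappa γ) / f < phiB γ b + kappa γ * b) :
    ∃! B : ℝ, 0 < B ∧
      phiB γ B + b * f * phiB γ (B / (b * f)) + phiF γ f - f * phiB γ b = 0 := by
  have hκ := kappa_pos hγ
  have hα := alpha_pos hγ
  have hbf : 0 < b * f := mul_pos hb hf
  set C : ℝ := phiF γ f - f * phiB γ b with hCdef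
  have hC : C < kappa γ * (1 + b * f) := by
    rw [div_lt_iff₀ hf] at hnovac
    nlinarith
  set G : ℝ → ℝ := fun B => phiB γ B + b * f * phiB γ (B / (b * f)) + C with hGdef
  -- strict monotonicity of G on Ioi 0
  have hGmono : ∀ x y : ℝ, 0 < x → x < y → G x < G y := by
    intro x y hx hxy
    have h1 := phiB_strictMonoOn hγ hx hxy
    have h2 := phiB_strictMonoOn hγ (div_pos hx hbf) (by gcongr : x / (b*f) < y / (b*f))
    have h3 := mul_lt_mul_of_pos_left h2 hbf
    simp only [hGdef]
    linarith
  -- existence via IVT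
  have hδ : 0 < kappa γ * (1 + b * f) - C := by linarith
  set B₀ : ℝ := min 1 (min (b * f) ((kappa γ * (1 + b * f) - C) / (4 * kappa γ))) with hB₀def
  have hB₀pos : 0 < B₀ := lt_min one_pos (lt_min hbf (by positivity))
  have hB₀le1 : B₀ ≤ 1 := min_le_left _ _
  have hB₀lebf : B₀ ≤ b * f := le_trans (min_le_right _ _) (min_le_left _ _)
  have hB₀leδ : B₀ ≤ (kappa γ * (1 + b * f) - C) / (4 * kappa γ) :=
    le_trans (min_le_right _ _) (min_le_right _ _)
  have hGB₀ : G B₀ < 0 := by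
    have h1 : phiB γ B₀ = kappa γ * (B₀ - 1) := by simp [phiB, hB₀le1]
    have h2 : phiB γ (B₀ / (b * f)) = kappa γ * (B₀ / (b * f) - 1) := by
      have : B₀ / (b * f) ≤ 1 := (div_le_one hbf).2 hB₀lebf
      simp [phiB, this]
    have h3 : b * f * (kappa γ * (B₀ / (b * f) - 1)) = kappa γ * B₀ - kappa γ * (b * f) := by
      field_simp
    have h4 : 2 * kappa γ * B₀ ≤ (kappa γ * (1 + b * f) - C) / 2 := by
      rw [le_div_iff₀ (by norm_num : (0:ℝ) < 2)]
      have := mul_le_mul_of_nonneg_left hB₀leδ (by positivity : (0:ℝ) ≤ 4 * kappa γ)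
      rw [mul_div_cancel₀ _ (by positivity : (4 * kappa γ) ≠ 0)] at this
      nlinarith
    simp only [hGdef]
    rw [h1, h2, h3]
    nlinarith
  set M : ℝ := max (kappa γ * (b * f) - C) 0 with hMdef
  have hM0 : 0 ≤ M := le_max_right _ _
  set B₁ : ℝ := max ((2:ℝ) ^ ((γ - 1) / 2)) (2 * M ^ 2 + 1) with hB₁def
  have h2α : (1:ℝ) < (2:ℝ) ^ ((γ - 1) / 2) :=
    (Real.one_lt_rpow_iff_of_pos two_pos).2 (Or.inl ⟨one_lt_two, hα⟩)
  have hB₁gt1 : 1 < B₁ := lt_of_lt_of_le h2α (le_max_left _ _)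
  have hB₁pos : (0:ℝ) < B₁ := by linarith
  have hGB₁ : 0 < G B₁ := by
    have hshock : M ≤ shockPart γ B₁ := by
      have ha : (1:ℝ)/2 ≤ 1 - B₁ ^ (-(1 : ℝ) / ((γ - 1) / 2)) := by
        have h1 : B₁ ^ (-(1 : ℝ) / ((γ - 1) / 2)) ≤
            ((2:ℝ) ^ ((γ - 1) / 2)) ^ (-(1 : ℝ) / ((γ - 1) / 2)) := by
          rw [neg_div, Real.rpow_neg hB₁pos.le, Real.rpow_neg (by positivity)]
          exact inv_anti₀ (Real.rpow_pos_of_pos (by positivity) _)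
            (Real.rpow_le_rpow (by positivity) (le_max_left _ _) (by positivity))
        have h2 : ((2:ℝ) ^ ((γ - 1) / 2)) ^ (-(1 : ℝ) / ((γ - 1) / 2)) = 1/2 := by
          rw [← Real.rpow_mul (by norm_num : (0:ℝ) ≤ 2)]
          have : (γ - 1) / 2 * (-(1 : ℝ) / ((γ - 1) / 2)) = -1 := by
            rw [mul_comm, div_mul_cancel₀ _ (ne_of_gt hα)]
          rw [this, Real.rpow_neg_one]
          norm_num
        linarith [h1.trans_eq h2]
      have hc : 2 * M ^ 2 ≤ B₁ ^ (γ / ((γ - 1) / 2)) - 1 := by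
        have h1 : B₁ ≤ B₁ ^ (γ / ((γ - 1) / 2)) := by
          calc B₁ = B₁ ^ (1:ℝ) := (Real.rpow_one _).symm
            _ ≤ B₁ ^ (γ / ((γ - 1) / 2)) :=
              Real.rpow_le_rpow_of_exponent_le hB₁gt1.le
                (by rw [le_div_iff₀ hα]; linarith)
        have h2 : 2 * M ^ 2 + 1 ≤ B₁ := le_max_right _ _
        linarith
      calc M = Real.sqrt (M ^ 2) := (Real.sqrt_sq hM0).symm
        _ ≤ shockPart γ B₁ := by
          apply Real.sqrt_le_sqrt
          calc M ^ 2 = (1/2) * (2 * M ^ 2) := by ring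
            _ ≤ (1 - B₁ ^ (-(1 : ℝ) / ((γ - 1) / 2))) * (B₁ ^ (γ / ((γ - 1) / 2)) - 1) := by
              apply mul_le_mul ha hc (by positivity) (by linarith)
    have hphiB₁ : phiB γ B₁ = shockPart γ B₁ := by simp [phiB, not_le.2 hB₁gt1]
    have hlow : -kappa γ < phiB γ (B₁ / (b * f)) :=
      phiB_gt_neg_kappa hγ (div_pos hB₁pos hbf)
    have hlow2 : b * f * (-kappa γ) < b * f * phiB γ (B₁ / (b * f)) :=
      mul_lt_mul_of_pos_left hlow hbf
    have hMge : kappa γ * (b * f) - C ≤ M := le_max_left _ _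
    simp only [hGdef]
    rw [hphiB₁]
    nlinarith
  -- IVT
  have hB₀B₁ : B₀ ≤ B₁ := hB₀le1.trans hB₁gt1.le
  have hcont : ContinuousOn G (Icc B₀ B₁) := by
    intro x hx
    have hxpos : 0 < x := lt_of_lt_of_le hB₀pos hx.1
    apply ContinuousAt.continuousWithinAt
    apply ContinuousAt.add
    apply ContinuousAt.add
    · exact phiB_continuousAt hxpos
    · apply continuousAt_const.mul
      have hdiv : ContinuousAt (fun B : ℝ => B / (b * f)) x := continuousAt_id.div_const _
      show ContinuousAt (phiB γ ∘ fun B : ℝ => B / (b * f)) x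
      exact ContinuousAt.comp (phiB_continuousAt (div_pos hxpos hbf)) hdiv
    · exact continuousAt_const
  have h0mem : (0:ℝ) ∈ Icc (G B₀) (G B₁) := ⟨hGB₀.le, hGB₁.le⟩
  obtain ⟨B, hBmem, hGB⟩ := intermediate_value_Icc hB₀B₁ hcont h0mem
  have hBpos : 0 < B := lt_of_lt_of_le hB₀pos hBmem.1
  have hGiff : ∀ x : ℝ, phiB γ x + b * f * phiB γ (x / (b * f)) + phiF γ f - f * phiB γ b
      = G x := by
    intro x
    simp only [hGdef, hCdef]
    ring
  refine ⟨B, ⟨hBpos, by rw [hGiff]; exact hGB⟩, ?_⟩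
  rintro B' ⟨hB'pos, hB'eq⟩
  rw [hGiff] at hB'eq
  by_contra hne
  rcases lt_or_gt_of_ne hne with hlt | hlt
  · have := hGmono B' B hB'pos hlt
    rw [hB'eq, hGB] at this
    exact lt_irrefl 0 this
  · have := hGmono B B' hBpos hlt
    rw [hB'eq, hGB] at this
    exact lt_irrefl 0 this
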